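/- If A ⊆ ℂ is a measurable subset of the disk Δ_r of planar Lebesgue measure V, and n ≥ 1, then there exist n points x_1, …, x_n ∈ A such that |x_i - x_j| ≥ sqrt(V/(π·n)) for all i ≠ j. -/

import Mathlib

open MeasureTheory Metric
open scoped ENNReal

theorem separated_aux (A : Set ℂ) (μA : ℝ≥0∞) (hμA : volume A = μA) (hμA' : μA ≠ ⊤)
    (V : ℝ) (hV : V = μA.toReal) (hVpos : 0 < V) (n : ℕ) (hn : 1 ≤ n) :
    ∀ k : ℕ, k ≤ n → ∃ x : Fin k → ℂ, (∀ i, x i ∈ A) ∧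
      ∀ i j, i ≠ j → Real.sqrt (V / (Real.pi * n)) ≤ dist (x i) (x j) := by
  intro k
  induction k with
  | zero => exact fun _ => ⟨Fin.elim0, fun i => i.elim0, fun i => i.elim0⟩
  | succ m ih =>
    intro hm
    obtain ⟨x, hxA, hxsep⟩ := ih (Nat.le_of_succ_le hm)
    set δ : ℝ := Real.sqrt (V / (Real.pi * n)) with hδ
    have hπ : (0 : ℝ) < Real.pi := Real.pi_pos
    have hn0 : (0 : ℝ) < n := by exact_mod_cast hn
    have hδsq : δ ^ 2 = V / (Real.pi * n) := by
      rw [hδ, Real.sq_sqrt (by positivity)]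
    -- volume of each ball
    have hball : ∀ c : ℂ, volume (ball c δ) = ENNReal.ofReal (V / n) := by
      intro c
      rw [Complex.volume_ball, ← ENNReal.ofReal_pow (Real.sqrt_nonneg _), hδsq,
        ← ENNReal.ofReal_coe_nnreal, NNReal.coe_real_pi,
        ← ENNReal.ofReal_mul (by positivity)]
      congr 1
      field_simp
    set S : Set ℂ := ⋃ i, ball (x i) δ with hS
    have hvolS : volume S ≤ (m : ℝ≥0∞) * ENNReal.ofReal (V / n) := by
      calc volume S ≤ ∑ i : Fin m, volume (ball (x i) δ) := measure_iUnion_fintype_le _ _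
        _ = (m : ℝ≥0∞) * ENNReal.ofReal (V / n) := by
            simp [hball, Finset.sum_const, Finset.card_univ, mul_comm]
    have hvA : volume A = ENNReal.ofReal V := by
      rw [hμA, hV, ENNReal.ofReal_toReal hμA']
    have hlt : volume S < volume A := by
      rw [hvA]
      refine lt_of_le_of_lt hvolS ?_
      rw [← ENNReal.ofReal_natCast, ← ENNReal.ofReal_mul (by positivity)]
      apply (ENNReal.ofReal_lt_ofReal_iff hVpos).mpr
      have hmn : (m : ℝ) ≤ (n : ℝ) - 1 := by
        have : (m : ℝ) + 1 ≤ n := by exact_mod_cast hm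
        linarith
      calc (m : ℝ) * (V / n) ≤ ((n : ℝ) - 1) * (V / n) := by
            apply mul_le_mul_of_nonneg_right hmn (by positivity)
        _ < V := by
            rw [sub_mul, one_mul, mul_div_cancel₀ _ (ne_of_gt hn0)]
            have : 0 < V / n := by positivity
            linarith
    have hnonempty : (A \ S).Nonempty := by
      by_contra h
      rw [Set.not_nonempty_iff_eq_empty] at h
      have : volume A ≤ volume S := by
        calc volume A ≤ volume (S ∪ (A \ S)) := measure_mono (fun a ha => by
              by_cases h' : a ∈ S
              · exact Or.inl h'
              · exact Or.inr ⟨ha, h'⟩)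
          _ = volume S := by rw [h, Set.union_empty]
      exact absurd this (not_le.mpr hlt)
    obtain ⟨a, haA, haS⟩ := hnonempty
    refine ⟨Fin.snoc x a, ?_, ?_⟩
    · intro i
      rcases Fin.eq_castSucc_or_eq_last i with ⟨i', rfl⟩ | rfl
      · simp [Fin.snoc_castSucc, hxA i']
      · simp [Fin.snoc_last, haA]
    · have hkey : ∀ j : Fin m, δ ≤ dist a (x j) := by
        intro j
        by_contra h
        exact haS (Set.mem_iUnion.mpr ⟨j, by simpa [mem_ball, dist_comm] using not_le.mp h⟩)
      intro i j hij
      rcases Fin.eq_castSucc_or_eq_last i with ⟨i', rfl⟩ | rfl <;>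
        rcases Fin.eq_castSucc_or_eq_last j with ⟨j', rfl⟩ | rfl
      · simp only [Fin.snoc_castSucc]
        exact hxsep i' j' (by simpa using hij)
      · simp only [Fin.snoc_castSucc, Fin.snoc_last]
        rw [dist_comm]
        exact hkey i'
      · simp only [Fin.snoc_castSucc, Fin.snoc_last]
        exact hkey j'
      · exact absurd rfl hij

theorem separated_points_in_set (r : ℝ) (A : Set ℂ) (hA : MeasurableSet A)
    (hsub : A ⊆ ball (0 : ℂ) r) (V : ℝ) (hV : V = (volume A).toReal)
    (hVpos : 0 < V) (n : ℕ) (hn : 1 ≤ n) :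
    ∃ x : Fin n → ℂ, (∀ i, x i ∈ A) ∧
      ∀ i j, i ≠ j → Real.sqrt (V / (Real.pi * n)) ≤ ‖x i - x j‖ := by
  have hfin : volume A ≠ ⊤ := by
    refine ne_top_of_le_ne_top ?_ (measure_mono hsub)
    simp [Complex.volume_ball]
    exact ENNReal.mul_ne_top (by simp) (by simp)
  obtain ⟨x, hxA, hxsep⟩ := separated_aux A (volume A) rfl hfin V hV hVpos n hn n le_rfl
  exact ⟨x, hxA, fun i j hij => by rw [← Complex.dist_eq]; exact hxsep i j hij⟩
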